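/- arXiv:1306.5074 — 3 statements merged into one kernel-verified Lean document; each statement's English description precedes it below -/
import Mathlib

section
/- Let A ∈ ℂ^{m×n}, B ∈ ℂ^{m×p1}, C ∈ ℂ^{m×p2}, D ∈ ℂ^{q1×n}, E ∈ ℂ^{q2×n} be given, and suppose the matrix equation B·X·D + C·Y·E = A has at least one solution (X, Y) with X ∈ ℂ^{p1×q1}, Y ∈ ℂ^{p2×q2}. Then the minimum of r(Y) over all pairs (X, Y) satisfying B·X·D + C·Y·E = A equals r([A B]) + r([A; D]) − r([A B; D 0]). -/
open Matrix Submodule LinearMap Module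

section AuxGeneral
variable {K : Type*} [Field K] {U V W Z : Type*}
  [AddCommGroup U] [Module K U] [AddCommGroup V] [Module K V]
  [AddCommGroup W] [Module K W] [AddCommGroup Z] [Module K Z]

/-- Generalized inverse, pointwise form. -/
lemma aux_ginv (f : V →ₗ[K] W) : ∃ g : W →ₗ[K] V, ∀ v, f (g (f v)) = f v := by
  obtain ⟨r, hr⟩ := f.rangeRestrict.exists_rightInverse_of_surjective
    (by rw [LinearMap.range_eq_top]; exact f.surjective_rangeRestrict)
  obtain ⟨l, hl⟩ := (LinearMap.range f).subtype.exists_leftInverse_of_injective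
    (Submodule.ker_subtype _)
  refine ⟨r ∘ₗ l, fun v => ?_⟩
  have h1 : l (f v) = f.rangeRestrict v := by
    have := LinearMap.congr_fun hl (f.rangeRestrict v)
    simpa using this
  have h2 : f.rangeRestrict (r (f.rangeRestrict v)) = f.rangeRestrict v :=
    LinearMap.congr_fun hr (f.rangeRestrict v)
  have h3 : (f.rangeRestrict (r (f.rangeRestrict v)) : W) = f (r (f.rangeRestrict v)) := rfl
  simp only [LinearMap.comp_apply, h1]
  rw [← h3, h2]
  rfl

lemma aux_rank_map' [FiniteDimensional K V] (f : V →ₗ[K] W) (p : Submodule K V) :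
    finrank K (p.map f) + finrank K (LinearMap.ker f ⊓ p : Submodule K V) = finrank K p := by
  have h := LinearMap.finrank_range_add_finrank_ker (f.domRestrict p)
  rw [LinearMap.range_domRestrict] at h
  have hker : finrank K (LinearMap.ker (f.domRestrict p)) =
      finrank K (LinearMap.ker f ⊓ p : Submodule K V) := by
    rw [LinearMap.ker_domRestrict]
    have e1 : p.comap p.subtype = ⊤ := by
      rw [Submodule.comap_subtype_self]
    have : (LinearMap.ker f).comap p.subtype = ((LinearMap.ker f ⊓ p).comap p.subtype) := by
      rw [Submodule.comap_inf, e1, inf_top_eq]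
    rw [this]
    exact (Submodule.comapSubtypeEquivOfLe inf_le_right).finrank_eq
  omega

/-- Frobenius rank inequality. -/
lemma aux_frobenius [FiniteDimensional K V] [FiniteDimensional K W]
    (f : W →ₗ[K] Z) (nmap : V →ₗ[K] W) (g : U →ₗ[K] V) :
    finrank K (LinearMap.range (f ∘ₗ nmap)) + finrank K (LinearMap.range (nmap ∘ₗ g))
      ≤ finrank K (LinearMap.range ((f ∘ₗ nmap) ∘ₗ g)) + finrank K (LinearMap.range nmap) := by
  have h1 : LinearMap.range ((f ∘ₗ nmap) ∘ₗ g) = (LinearMap.range (nmap ∘ₗ g)).map f := by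
    rw [LinearMap.comp_assoc, LinearMap.range_comp, LinearMap.range_comp]
  have h2 : LinearMap.range (f ∘ₗ nmap) = (LinearMap.range nmap).map f :=
    LinearMap.range_comp _ _
  have e1 := aux_rank_map' f (LinearMap.range (nmap ∘ₗ g))
  have e2 := aux_rank_map' f (LinearMap.range nmap)
  have hle : finrank K (LinearMap.ker f ⊓ LinearMap.range (nmap ∘ₗ g) : Submodule K W)
      ≤ finrank K (LinearMap.ker f ⊓ LinearMap.range nmap : Submodule K W) := by
    apply Submodule.finrank_mono
    refine inf_le_inf_left _ ?_
    rw [LinearMap.range_comp]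
    rintro w ⟨v, hv, rfl⟩
    exact LinearMap.mem_range_self _ _
  rw [h1, h2]
  omega

lemma aux_proj_sub_mem {p q : Submodule K V} (h : IsCompl p q) (u : V) :
    u - (p.projectionOnto q h u : V) ∈ q := by
  have hu : u ∈ p ⊔ q := by rw [h.sup_eq_top]; trivial
  obtain ⟨x, hx, y, hy, rfl⟩ := Submodule.mem_sup.mp hu
  have : p.projectionOnto q h (x + y) = ⟨x, hx⟩ := by
    rw [map_add, Submodule.projectionOnto_apply_left h ⟨x, hx⟩,
      Submodule.projectionOnto_apply_right h ⟨y, hy⟩]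
    simp
  rw [this]
  simpa using hy

end AuxGeneral

lemma aux_rn {K V W : Type*} [Field K] [AddCommGroup V] [Module K V] [AddCommGroup W] [Module K W]
    [FiniteDimensional K V] (f : V →ₗ[K] W) :
    finrank K (LinearMap.range f) + finrank K (LinearMap.ker f) = finrank K V :=
  LinearMap.finrank_range_add_finrank_ker f

lemma aux_rank_fromColumns (m n p1 : ℕ) (A : Matrix (Fin m) (Fin n) ℂ)
    (B : Matrix (Fin m) (Fin p1) ℂ) :
    (fromCols A B).rank =
      finrank ℂ (LinearMap.range ((LinearMap.range B.mulVecLin).mkQ ∘ₗ A.mulVecLin)) + B.rank := by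
  classical
  have hr : LinearMap.range ((fromCols A B).mulVecLin)
      = LinearMap.range A.mulVecLin ⊔ LinearMap.range B.mulVecLin := by
    apply le_antisymm
    · rintro w ⟨x, rfl⟩
      have hx : (fromCols A B).mulVecLin x = A *ᵥ (x ∘ Sum.inl) + B *ᵥ (x ∘ Sum.inr) := by
        conv_lhs => rw [mulVecLin_apply, ← Sum.elim_comp_inl_inr x, fromCols_mulVec_sumElim]
      rw [hx]
      exact Submodule.add_mem_sup ⟨x ∘ Sum.inl, rfl⟩ ⟨x ∘ Sum.inr, rfl⟩
    · rw [sup_le_iff]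
      constructor
      · rintro w ⟨x, rfl⟩
        exact ⟨Sum.elim x 0, by simp [mulVecLin_apply]⟩
      · rintro w ⟨x, rfl⟩
        exact ⟨Sum.elim 0 x, by simp [mulVecLin_apply]⟩
  have h1 : finrank ℂ (LinearMap.range A.mulVecLin ⊔ LinearMap.range B.mulVecLin : Submodule ℂ _)
        + finrank ℂ (LinearMap.range A.mulVecLin ⊓ LinearMap.range B.mulVecLin : Submodule ℂ _)
      = finrank ℂ (LinearMap.range A.mulVecLin) + finrank ℂ (LinearMap.range B.mulVecLin) :=
    Submodule.finrank_sup_add_finrank_inf_eq _ _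
  have h2 : LinearMap.range ((LinearMap.range B.mulVecLin).mkQ ∘ₗ A.mulVecLin)
      = (LinearMap.range A.mulVecLin).map (LinearMap.range B.mulVecLin).mkQ :=
    LinearMap.range_comp _ _
  have h3 := aux_rank_map' (LinearMap.range B.mulVecLin).mkQ (LinearMap.range A.mulVecLin)
  rw [Submodule.ker_mkQ] at h3
  rw [Matrix.rank, hr, Matrix.rank, h2]
  rw [inf_comm] at h1
  omega

lemma aux_rank_fromRows (m n q1 : ℕ) (A : Matrix (Fin m) (Fin n) ℂ)
    (D : Matrix (Fin q1) (Fin n) ℂ) :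
    (fromRows A D).rank =
      finrank ℂ (LinearMap.range (A.mulVecLin ∘ₗ (LinearMap.ker D.mulVecLin).subtype))
        + D.rank := by
  classical
  have hk : LinearMap.ker ((fromRows A D).mulVecLin)
      = LinearMap.ker A.mulVecLin ⊓ LinearMap.ker D.mulVecLin := by
    ext x
    simp only [LinearMap.mem_ker, Submodule.mem_inf, mulVecLin_apply, fromRows_mulVec]
    constructor
    · intro h
      exact ⟨by ext i; exact congrFun h (Sum.inl i), by ext i; exact congrFun h (Sum.inr i)⟩
    · rintro ⟨h1, h2⟩
      rw [h1, h2]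
      ext (i | j) <;> rfl
  have hrn1 := LinearMap.finrank_range_add_finrank_ker ((fromRows A D).mulVecLin)
  have hrn2 := LinearMap.finrank_range_add_finrank_ker D.mulVecLin
  have h2 : LinearMap.range (A.mulVecLin ∘ₗ (LinearMap.ker D.mulVecLin).subtype)
      = (LinearMap.ker D.mulVecLin).map A.mulVecLin := by
    rw [LinearMap.range_comp, Submodule.range_subtype]
  have h3 := aux_rank_map' A.mulVecLin (LinearMap.ker D.mulVecLin)
  have hn : finrank ℂ (Fin n → ℂ) = n := by simp
  rw [hn] at hrn1 hrn2
  rw [hk] at hrn1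
  rw [Matrix.rank, Matrix.rank, h2]
  omega

set_option maxHeartbeats 1000000 in
set_option synthInstance.maxHeartbeats 400000 in
lemma aux_rank_fromBlocks (m n p1 q1 : ℕ) (A : Matrix (Fin m) (Fin n) ℂ)
    (B : Matrix (Fin m) (Fin p1) ℂ) (D : Matrix (Fin q1) (Fin n) ℂ) :
    (fromBlocks A B D 0).rank = B.rank + D.rank +
      finrank ℂ (LinearMap.range ((LinearMap.range B.mulVecLin).mkQ ∘ₗ
        A.mulVecLin ∘ₗ (LinearMap.ker D.mulVecLin).subtype)) := by
  classical
  set a := A.mulVecLin with ha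
  set b := B.mulVecLin with hb
  set d := D.mulVecLin with hd
  set π := (LinearMap.range b).mkQ with hπ
  set φ := (fromBlocks A B D 0).mulVecLin with hφdef
  let pl : ((Fin n ⊕ Fin p1) → ℂ) →ₗ[ℂ] (Fin n → ℂ) := LinearMap.funLeft ℂ ℂ Sum.inl
  have hplz : ∀ z, pl z = z ∘ Sum.inl := fun z => rfl
  have hφmem : ∀ z : ((Fin n ⊕ Fin p1) → ℂ), z ∈ LinearMap.ker φ ↔
      (a (z ∘ Sum.inl) + b (z ∘ Sum.inr) = 0 ∧ d (z ∘ Sum.inl) = 0) := by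
    intro z
    rw [LinearMap.mem_ker, hφdef, mulVecLin_apply, fromBlocks_mulVec]
    constructor
    · intro h
      refine ⟨?_, ?_⟩
      · ext i
        have := congrFun h (Sum.inl i)
        simpa [ha, hb, mulVecLin_apply] using this
      · ext j
        have := congrFun h (Sum.inr j)
        simpa [hd, mulVecLin_apply] using this
    · rintro ⟨h1, h2⟩
      ext (i | j)
      · have h1' := congrFun h1 i
        simpa [ha, hb, mulVecLin_apply] using h1'
      · have h2' := congrFun h2 j
        simpa [hd, mulVecLin_apply] using h2'
  set K' : Submodule ℂ (Fin n → ℂ) := LinearMap.ker d ⊓ Submodule.comap a (LinearMap.range b)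
    with hK'
  let ω : LinearMap.ker φ →ₗ[ℂ] (Fin n → ℂ) := pl ∘ₗ (LinearMap.ker φ).subtype
  have hωz : ∀ z : LinearMap.ker φ, ω z = (z : (Fin n ⊕ Fin p1) → ℂ) ∘ Sum.inl :=
    fun z => rfl
  have hrangeω : LinearMap.range ω = K' := by
    apply le_antisymm
    · rintro x ⟨⟨z, hz⟩, rfl⟩
      obtain ⟨h1, h2⟩ := (hφmem z).mp hz
      refine Submodule.mem_inf.mpr ⟨LinearMap.mem_ker.mpr h2, ?_⟩
      refine Submodule.mem_comap.mpr ⟨-(z ∘ Sum.inr), ?_⟩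
      have h3 : b (z ∘ Sum.inr) = -(a (z ∘ Sum.inl)) := eq_neg_of_add_eq_zero_right h1
      rw [map_neg, h3, neg_neg]
      rfl
    · rintro x hx
      obtain ⟨hx1, hx2⟩ := Submodule.mem_inf.mp hx
      obtain ⟨yv, hyv⟩ := Submodule.mem_comap.mp hx2
      have hzker : Sum.elim x (-yv) ∈ LinearMap.ker φ := by
        rw [hφmem]
        constructor
        · simp only [Sum.elim_comp_inl, Sum.elim_comp_inr, map_neg, hyv]
          abel
        · simpa [Sum.elim_comp_inl] using hx1
      exact ⟨⟨Sum.elim x (-yv), hzker⟩, by rw [hωz]; exact Sum.elim_comp_inl _ _⟩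
  let ext0 : (Fin p1 → ℂ) →ₗ[ℂ] ((Fin n ⊕ Fin p1) → ℂ) :=
    { toFun := fun y => Sum.elim 0 y
      map_add' := by intro y1 y2; ext (i | j) <;> simp
      map_smul' := by intro c y; ext (i | j) <;> simp }
  have hmem3 : ∀ y : LinearMap.ker b, (ext0 ∘ₗ (LinearMap.ker b).subtype) y ∈ LinearMap.ker φ := by
    rintro ⟨y, hy⟩
    show Sum.elim (0 : Fin n → ℂ) y ∈ LinearMap.ker φ
    rw [hφmem]
    refine ⟨?_, ?_⟩
    · rw [Sum.elim_comp_inl, Sum.elim_comp_inr, map_zero, zero_add]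
      exact hy
    · rw [Sum.elim_comp_inl, map_zero]
  let χ : LinearMap.ker b →ₗ[ℂ] LinearMap.ker φ :=
    LinearMap.codRestrict _ (ext0 ∘ₗ (LinearMap.ker b).subtype) hmem3
  have hχinj : LinearMap.ker χ = ⊥ := by
    rw [LinearMap.ker_eq_bot]
    intro y1 y2 h
    have h' : Sum.elim (0 : Fin n → ℂ) (y1 : Fin p1 → ℂ)
        = Sum.elim (0 : Fin n → ℂ) (y2 : Fin p1 → ℂ) :=
      congrArg (fun t : LinearMap.ker φ => (t : (Fin n ⊕ Fin p1) → ℂ)) h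
    apply Subtype.ext
    ext j
    exact congrFun h' (Sum.inr j)
  have hrangeχ : LinearMap.range χ = LinearMap.ker ω := by
    apply le_antisymm
    · rintro z ⟨y, rfl⟩
      rw [LinearMap.mem_ker, hωz]
      show Sum.elim (0 : Fin n → ℂ) (y : Fin p1 → ℂ) ∘ Sum.inl = 0
      exact Sum.elim_comp_inl _ _
    · rintro ⟨z, hz⟩ hker
      rw [LinearMap.mem_ker, hωz] at hker
      have hzl : z ∘ Sum.inl = 0 := hker
      have hy : z ∘ Sum.inr ∈ LinearMap.ker b := by
        rw [LinearMap.mem_ker]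
        have h1 := ((hφmem z).mp hz).1
        rw [hzl, map_zero, zero_add] at h1
        exact h1
      refine ⟨⟨z ∘ Sum.inr, hy⟩, ?_⟩
      apply Subtype.ext
      show Sum.elim (0 : Fin n → ℂ) (z ∘ Sum.inr) = z
      ext (i | j)
      · exact (congrFun hzl i).symm
      · rfl
  -- dimension bookkeeping
  set Q' : Submodule ℂ (Fin m → ℂ) := (LinearMap.ker d).map a with hQ'
  have hmapK : K'.map a = LinearMap.range b ⊓ Q' := by
    apply le_antisymm
    · rintro w ⟨x, hx, rfl⟩
      obtain ⟨hx1, hx2⟩ := Submodule.mem_inf.mp hx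
      exact Submodule.mem_inf.mpr ⟨Submodule.mem_comap.mp hx2, ⟨x, hx1, rfl⟩⟩
    · rintro w hw
      obtain ⟨hw1, x, hx, rfl⟩ := Submodule.mem_inf.mp hw
      exact ⟨x, Submodule.mem_inf.mpr ⟨hx, Submodule.mem_comap.mpr hw1⟩, rfl⟩
  have hinfK : LinearMap.ker a ⊓ K' = LinearMap.ker a ⊓ LinearMap.ker d := by
    apply le_antisymm
    · exact inf_le_inf_left _ inf_le_left
    · intro x hx
      obtain ⟨hx1, hx2⟩ := Submodule.mem_inf.mp hx
      exact Submodule.mem_inf.mpr ⟨hx1, Submodule.mem_inf.mpr ⟨hx2,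
        Submodule.mem_comap.mpr (by rw [LinearMap.mem_ker.mp hx1]; exact Submodule.zero_mem _)⟩⟩
  have hrmK := aux_rank_map' a K'
  have hrmQ := aux_rank_map' a (LinearMap.ker d)
  rw [← hQ'] at hrmQ
  rw [hmapK, hinfK] at hrmK
  have hrmπ := aux_rank_map' π Q'
  rw [Submodule.ker_mkQ] at hrmπ
  have hstmt : LinearMap.range (π ∘ₗ a ∘ₗ (LinearMap.ker d).subtype) = Q'.map π := by
    rw [LinearMap.range_comp, LinearMap.range_comp, Submodule.range_subtype]
  have hrnω := aux_rn (K := ℂ) (V := ↥(LinearMap.ker φ)) (W := Fin n → ℂ) ω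
  have hrnχ := aux_rn (K := ℂ) (V := ↥(LinearMap.ker b)) (W := ↥(LinearMap.ker φ)) χ
  have hbot : finrank ℂ ↥(LinearMap.ker χ) = 0 := by
    rw [hχinj]; exact finrank_bot ℂ _
  rw [hrangeχ, hbot] at hrnχ
  rw [hrangeω] at hrnω
  have hrnΦ := aux_rn (K := ℂ) (V := (Fin n ⊕ Fin p1) → ℂ) (W := (Fin m ⊕ Fin q1) → ℂ) φ
  have hrnd := aux_rn (K := ℂ) (V := Fin n → ℂ) (W := Fin q1 → ℂ) d
  have hrnb := aux_rn (K := ℂ) (V := Fin p1 → ℂ) (W := Fin m → ℂ) b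
  simp only [Module.finrank_pi, Fintype.card_sum, Fintype.card_fin] at hrnΦ hrnd hrnb
  show finrank ℂ (LinearMap.range φ)
      = finrank ℂ (LinearMap.range b) + finrank ℂ (LinearMap.range d) + _
  rw [hstmt]
  omega

set_option maxHeartbeats 2000000 in
set_option synthInstance.maxHeartbeats 400000 in
lemma aux_achieve (m n p1 p2 q1 q2 : ℕ)
    (A : Matrix (Fin m) (Fin n) ℂ) (B : Matrix (Fin m) (Fin p1) ℂ)
    (C : Matrix (Fin m) (Fin p2) ℂ) (D : Matrix (Fin q1) (Fin n) ℂ)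
    (E : Matrix (Fin q2) (Fin n) ℂ)
    (X0 : Matrix (Fin p1) (Fin q1) ℂ) (Y0 : Matrix (Fin p2) (Fin q2) ℂ)
    (h0 : B * X0 * D + C * Y0 * E = A) :
    ∃ (X : Matrix (Fin p1) (Fin q1) ℂ) (Y : Matrix (Fin p2) (Fin q2) ℂ),
      B * X * D + C * Y * E = A ∧
      Y.rank + finrank ℂ (LinearMap.range ((LinearMap.range B.mulVecLin).mkQ ∘ₗ
          A.mulVecLin ∘ₗ (LinearMap.ker D.mulVecLin).subtype))
        ≤ finrank ℂ (LinearMap.range ((LinearMap.range B.mulVecLin).mkQ ∘ₗ A.mulVecLin))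
          + finrank ℂ (LinearMap.range (A.mulVecLin ∘ₗ (LinearMap.ker D.mulVecLin).subtype)) := by
  classical
  set a := A.mulVecLin with ha
  set b := B.mulVecLin with hb
  set c := C.mulVecLin with hc
  set d := D.mulVecLin with hd
  set e := E.mulVecLin with he
  set π := (LinearMap.range b).mkQ with hπ
  set m0 : (Fin n → ℂ) →ₗ[ℂ] (Fin m → ℂ) := c ∘ₗ Y0.mulVecLin ∘ₗ e with hm0
  -- basic pointwise identity from the given solution
  have hv0 : ∀ v, a v = b (X0.mulVecLin (d v)) + m0 v := by
    intro v
    have h : (B * X0 * D + C * Y0 * E) *ᵥ v = A *ᵥ v := by rw [h0]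
    rw [Matrix.add_mulVec, ← Matrix.mulVec_mulVec, ← Matrix.mulVec_mulVec,
      ← Matrix.mulVec_mulVec, ← Matrix.mulVec_mulVec] at h
    simpa [ha, hb, hc, hd, he, hm0, mulVecLin_apply] using h.symm
  have hm0kerd : ∀ v, d v = 0 → m0 v = a v := by
    intro v hv
    rw [hv0 v, hv, map_zero, map_zero, zero_add]
  have hm0kere : ∀ v, e v = 0 → m0 v = 0 := by
    intro v hv
    show c (Y0.mulVecLin (e v)) = 0
    rw [hv, map_zero, map_zero]
  -- subspaces
  set T : Submodule ℂ (Fin n → ℂ) := LinearMap.ker d ⊔ LinearMap.ker e with hT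
  obtain ⟨S, hTS⟩ := Submodule.exists_isCompl T
  set PT : (Fin n → ℂ) →ₗ[ℂ] (Fin n → ℂ) := T.subtype ∘ₗ T.linearProjOfIsCompl S hTS with hPT
  set PS : (Fin n → ℂ) →ₗ[ℂ] (Fin n → ℂ) := LinearMap.id - PT with hPS
  have hPTmem : ∀ v, PT v ∈ T := fun v => Submodule.coe_mem _
  have hPSapply : ∀ v, PS v = v - PT v := fun v => rfl
  have hPS0 : ∀ t, t ∈ T → PS t = 0 := by
    intro t ht
    have : PT t = t := by
      show (T.linearProjOfIsCompl S hTS t : Fin n → ℂ) = t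
      have h2 : T.linearProjOfIsCompl S hTS t = ⟨t, ht⟩ :=
        Submodule.linearProjOfIsCompl_apply_left hTS ⟨t, ht⟩
      rw [h2]
    rw [hPSapply, this, sub_self]
  set Q : Submodule ℂ (Fin m → ℂ) := (LinearMap.ker d).map m0 with hQ
  set J : Submodule ℂ (Fin m → ℂ) := LinearMap.range b ⊓ LinearMap.range c with hJ
  set QJ : Submodule ℂ (Fin m → ℂ) := Q ⊔ J with hQJ
  obtain ⟨R, hQJR⟩ := Submodule.exists_isCompl QJ
  have hm0T : ∀ t, t ∈ T → m0 t ∈ Q := by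
    intro t ht
    rw [hT] at ht
    obtain ⟨k, hk, e', he', rfl⟩ := Submodule.mem_sup.mp ht
    rw [map_add, hm0kere e' (LinearMap.mem_ker.mp he'), add_zero]
    exact ⟨k, hk, rfl⟩
  have hm0rc : ∀ v, m0 v ∈ LinearMap.range c := fun v => ⟨Y0.mulVecLin (e v), rfl⟩
  -- linear selection of the J-component inside QJ
  set ε : (Q × J) →ₗ[ℂ] (Fin m → ℂ) := Q.subtype.coprod J.subtype with hε
  have hmemε : ∀ p : Q × J, ε p ∈ QJ := by
    intro p
    rw [hε, LinearMap.coprod_apply, hQJ]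
    exact Submodule.add_mem_sup (Submodule.coe_mem p.1) (Submodule.coe_mem p.2)
  set ε' : (Q × J) →ₗ[ℂ] QJ := LinearMap.codRestrict QJ ε hmemε with hε'
  have hε'top : LinearMap.range ε' = ⊤ := by
    rw [LinearMap.range_eq_top]
    rintro ⟨u, hu⟩
    rw [hQJ] at hu
    obtain ⟨xq, hxq, xj, hxj, rfl⟩ := Submodule.mem_sup.mp hu
    exact ⟨(⟨xq, hxq⟩, ⟨xj, hxj⟩), Subtype.ext rfl⟩
  obtain ⟨σ, hσ⟩ := ε'.exists_rightInverse_of_surjective hε'top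
  set prQJ := QJ.linearProjOfIsCompl R hQJR with hprQJ
  set θ : (Fin m → ℂ) →ₗ[ℂ] (Fin m → ℂ) :=
    J.subtype ∘ₗ (LinearMap.snd ℂ Q J) ∘ₗ σ ∘ₗ prQJ with hθ
  have hθJ : ∀ u, θ u ∈ J := fun u => Submodule.coe_mem _
  have hσsum : ∀ w : QJ, ((σ w).1 : Fin m → ℂ) + ((σ w).2 : Fin m → ℂ) = (w : Fin m → ℂ) := by
    intro w
    have h1 : ε' (σ w) = w := LinearMap.congr_fun hσ w
    have h2 : (ε' (σ w) : Fin m → ℂ) = ε (σ w) := rfl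
    rw [h1] at h2
    rw [h2]
    rfl
  have hθQ : ∀ u, (prQJ u : Fin m → ℂ) - θ u ∈ Q := by
    intro u
    have := hσsum (prQJ u)
    have hθu : θ u = ((σ (prQJ u)).2 : Fin m → ℂ) := rfl
    rw [hθu, ← this]
    simpa using Submodule.coe_mem (σ (prQJ u)).1
  -- the minimizing map N
  set N : (Fin n → ℂ) →ₗ[ℂ] (Fin m → ℂ) := m0 - θ ∘ₗ m0 ∘ₗ PS with hN
  have hNapply : ∀ v, N v = m0 v - θ (m0 (PS v)) := fun v => rfl
  have hΔb : ∀ v, a v - N v ∈ LinearMap.range b := by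
    intro v
    rw [hNapply]
    have h1 : a v - (m0 v - θ (m0 (PS v))) = b (X0.mulVecLin (d v)) + θ (m0 (PS v)) := by
      rw [hv0 v]; abel
    rw [h1]
    exact Submodule.add_mem _ ⟨_, rfl⟩ ((hθJ _).1)
  have hNa : ∀ v, d v = 0 → N v = a v := by
    intro v hv
    have hvT : v ∈ T := by
      rw [hT]; exact Submodule.mem_sup_left (LinearMap.mem_ker.mpr hv)
    rw [hNapply, hPS0 v hvT, map_zero, map_zero, sub_zero]
    exact hm0kerd v hv
  have hNc : ∀ v, N v ∈ LinearMap.range c := by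
    intro v
    rw [hNapply]
    exact Submodule.sub_mem _ (hm0rc v) ((hθJ _).2)
  have hNe : ∀ v, e v = 0 → N v = 0 := by
    intro v hv
    have hvT : v ∈ T := by
      rw [hT]; exact Submodule.mem_sup_right (LinearMap.mem_ker.mpr hv)
    rw [hNapply, hPS0 v hvT, map_zero, map_zero, sub_zero]
    exact hm0kere v hv
  -- rank bound for N
  set W' : Submodule ℂ (Fin m → ℂ) := LinearMap.range (m0 ∘ₗ PS) with hW'
  set ρR : (Fin m → ℂ) →ₗ[ℂ] (Fin m → ℂ) := LinearMap.id - QJ.subtype ∘ₗ prQJ with hρR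
  have hρRapply : ∀ u, ρR u = u - (prQJ u : Fin m → ℂ) := fun u => rfl
  have hrangeN : LinearMap.range N ≤ Q ⊔ W'.map ρR := by
    rintro w ⟨v, rfl⟩
    have hsplit : m0 v = m0 (PT v) + m0 (PS v) := by
      rw [← map_add]
      congr 1
      rw [hPSapply]
      abel
    have hw' : m0 (PS v) ∈ W' := ⟨v, rfl⟩
    have hNv : N v = (m0 (PT v) + ((prQJ (m0 (PS v)) : Fin m → ℂ) - θ (m0 (PS v))))
        + ρR (m0 (PS v)) := by
      rw [hNapply, hρRapply]
      rw [hsplit]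
      abel
    rw [hNv]
    apply Submodule.add_mem_sup
    · exact Submodule.add_mem _ (hm0T _ (hPTmem v)) (hθQ _)
    · exact Submodule.mem_map_of_mem hw'
  have hkerρR : LinearMap.ker ρR = QJ := by
    apply le_antisymm
    · intro u hu
      have h1 : u - (prQJ u : Fin m → ℂ) = 0 := hu
      have h2 : u = (prQJ u : Fin m → ℂ) := by rwa [sub_eq_zero] at h1
      rw [h2]
      exact Submodule.coe_mem _
    · intro u hu
      have h2 : prQJ u = ⟨u, hu⟩ := Submodule.linearProjOfIsCompl_apply_left hQJR ⟨u, hu⟩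
      show u - (prQJ u : Fin m → ℂ) = 0
      rw [h2]
      exact sub_self u
  have hfin1 : finrank ℂ (LinearMap.range N) ≤ finrank ℂ (Q ⊔ W'.map ρR : Submodule ℂ _) :=
    Submodule.finrank_mono hrangeN
  have hfin2 := Submodule.finrank_sup_add_finrank_inf_eq Q (W'.map ρR)
  have h2 := aux_rank_map' ρR W'
  rw [hkerρR] at h2
  have h3 := Submodule.finrank_sup_add_finrank_inf_eq QJ W'
  have hsupeq : QJ ⊔ W' = (Q ⊔ W') ⊔ J := by
    rw [hQJ, sup_assoc, sup_assoc, sup_comm J W']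
  rw [hsupeq] at h3
  have hCD : ∀ V' : Submodule ℂ (Fin m → ℂ), V' ≤ LinearMap.range c →
      finrank ℂ (V' ⊔ J : Submodule ℂ _) + finrank ℂ (LinearMap.range b)
        = finrank ℂ (V' ⊔ LinearMap.range b : Submodule ℂ _) + finrank ℂ J := by
    intro V' hV'
    have e1 := Submodule.finrank_sup_add_finrank_inf_eq V' J
    have e2 := Submodule.finrank_sup_add_finrank_inf_eq V' (LinearMap.range b)
    have e3 : V' ⊓ LinearMap.range b = V' ⊓ J := by
      apply le_antisymm
      · exact le_inf inf_le_left (le_inf inf_le_right (le_trans inf_le_left hV'))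
      · exact inf_le_inf_left _ inf_le_left
    rw [e3] at e2
    omega
  have hQc : Q ≤ LinearMap.range c := by
    rintro w ⟨v, hv, rfl⟩
    exact hm0rc v
  have hW'c : W' ≤ LinearMap.range c := by
    rintro w ⟨v, rfl⟩
    exact hm0rc _
  have hCD1 := hCD (Q ⊔ W') (sup_le hQc hW'c)
  have hCD2 := hCD Q hQc
  rw [← hQJ] at hCD2
  have haB : LinearMap.range a ⊔ LinearMap.range b = (Q ⊔ W') ⊔ LinearMap.range b := by
    apply le_antisymm
    · apply sup_le
      · rintro w ⟨v, rfl⟩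
        have hsplit : m0 v = m0 (PT v) + m0 (PS v) := by
          rw [← map_add]
          congr 1
          rw [hPSapply]
          abel
        have hav : a v = (m0 (PT v) + m0 (PS v)) + b (X0.mulVecLin (d v)) := by
          rw [← hsplit, hv0 v]
          abel
        rw [hav]
        apply Submodule.add_mem_sup
        · exact Submodule.add_mem_sup (hm0T _ (hPTmem v)) ⟨v, rfl⟩
        · exact ⟨_, rfl⟩
      · exact le_sup_right
    · apply sup_le
      · apply sup_le
        · rintro w ⟨v, hv, rfl⟩
          have hm : m0 v = a v := hm0kerd v (LinearMap.mem_ker.mp hv)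
          rw [hm]
          exact Submodule.mem_sup_left ⟨v, rfl⟩
        · rintro w ⟨v, rfl⟩
          have hm : m0 (PS v) = a (PS v) - b (X0.mulVecLin (d (PS v))) := by
            rw [hv0 (PS v)]
            abel
          show m0 (PS v) ∈ _
          rw [hm]
          exact Submodule.sub_mem _ (Submodule.mem_sup_left ⟨_, rfl⟩)
            (Submodule.mem_sup_right ⟨_, rfl⟩)
      · exact le_sup_right
  have hkerπ : LinearMap.ker π = LinearMap.range b := Submodule.ker_mkQ _
  have e_a1 := aux_rank_map' π (LinearMap.range a)
  rw [hkerπ] at e_a1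
  have e_a2 := Submodule.finrank_sup_add_finrank_inf_eq (LinearMap.range a) (LinearMap.range b)
  rw [haB] at e_a2
  have hinfcomm1 : LinearMap.range b ⊓ LinearMap.range a
      = LinearMap.range a ⊓ LinearMap.range b := inf_comm _ _
  rw [hinfcomm1] at e_a1
  have g1 : finrank ℂ (LinearMap.range (π ∘ₗ a)) = finrank ℂ ((LinearMap.range a).map π) := by
    rw [LinearMap.range_comp]
  have hQa : (LinearMap.ker d).map a = Q := by
    apply le_antisymm
    · rintro w ⟨v, hv, rfl⟩
      have hm : a v = m0 v := (hm0kerd v (LinearMap.mem_ker.mp hv)).symm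
      rw [hm]
      exact ⟨v, hv, rfl⟩
    · rintro w ⟨v, hv, rfl⟩
      have hm : m0 v = a v := hm0kerd v (LinearMap.mem_ker.mp hv)
      rw [hm]
      exact ⟨v, hv, rfl⟩
  have g2 : finrank ℂ (LinearMap.range (a ∘ₗ (LinearMap.ker d).subtype)) = finrank ℂ Q := by
    rw [LinearMap.range_comp, Submodule.range_subtype, hQa]
  have g3 : finrank ℂ (LinearMap.range (π ∘ₗ a ∘ₗ (LinearMap.ker d).subtype))
      = finrank ℂ (Q.map π) := by
    rw [LinearMap.range_comp, LinearMap.range_comp, Submodule.range_subtype, hQa]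
  have e_c1 := aux_rank_map' π Q
  rw [hkerπ] at e_c1
  have e_c2 := Submodule.finrank_sup_add_finrank_inf_eq Q (LinearMap.range b)
  have hinfcomm2 : LinearMap.range b ⊓ Q = Q ⊓ LinearMap.range b := inf_comm _ _
  rw [hinfcomm2] at e_c1
  have hNbound : finrank ℂ (LinearMap.range N)
        + finrank ℂ (LinearMap.range (π ∘ₗ a ∘ₗ (LinearMap.ker d).subtype))
      ≤ finrank ℂ (LinearMap.range (π ∘ₗ a))
        + finrank ℂ (LinearMap.range (a ∘ₗ (LinearMap.ker d).subtype)) := by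
    rw [g1, g2, g3]
    omega
  -- build y and x
  obtain ⟨einv, heinv⟩ := aux_ginv (K := ℂ) e
  obtain ⟨cinv, hcinv⟩ := aux_ginv (K := ℂ) c
  obtain ⟨dinv, hdinv⟩ := aux_ginv (K := ℂ) d
  obtain ⟨binv, hbinv⟩ := aux_ginv (K := ℂ) b
  set y : (Fin q2 → ℂ) →ₗ[ℂ] (Fin p2 → ℂ) := cinv ∘ₗ N ∘ₗ einv with hy
  set Δ : (Fin n → ℂ) →ₗ[ℂ] (Fin m → ℂ) := a - N with hΔdef
  have hΔapp : ∀ u, Δ u = a u - N u := fun u => rfl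
  set x : (Fin q1 → ℂ) →ₗ[ℂ] (Fin p1 → ℂ) := binv ∘ₗ Δ ∘ₗ dinv with hx
  have hcye : ∀ v, c (y (e v)) = N v := by
    intro v
    have h1 : N (einv (e v)) = N v := by
      have h2 : e (einv (e v) - v) = 0 := by rw [map_sub, heinv v, sub_self]
      have h3 := hNe _ h2
      rw [map_sub] at h3
      exact sub_eq_zero.mp h3
    obtain ⟨t, ht⟩ := hNc (einv (e v))
    show c (cinv (N (einv (e v)))) = N v
    rw [← ht, hcinv t, ht, h1]
  have hbxd : ∀ v, b (x (d v)) = a v - N v := by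
    intro v
    have h1 : Δ (dinv (d v)) = Δ v := by
      have h2 : d (dinv (d v) - v) = 0 := by rw [map_sub, hdinv v, sub_self]
      have hz : Δ (dinv (d v) - v) = 0 := by
        rw [hΔapp, hNa _ h2, sub_self]
      rw [map_sub] at hz
      exact sub_eq_zero.mp hz
    have hmem : Δ (dinv (d v)) ∈ LinearMap.range b := by
      rw [hΔapp]
      exact hΔb _
    obtain ⟨t, ht⟩ := hmem
    show b (binv (Δ (dinv (d v)))) = a v - N v
    rw [← ht, hbinv t, ht, h1, hΔapp]
  refine ⟨LinearMap.toMatrix' x, LinearMap.toMatrix' y, ?_, ?_⟩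
  · apply Matrix.toLin'.injective
    rw [map_add, Matrix.toLin'_mul, Matrix.toLin'_mul, Matrix.toLin'_mul, Matrix.toLin'_mul,
      Matrix.toLin'_toMatrix', Matrix.toLin'_toMatrix']
    have hBt : Matrix.toLin' B = b := LinearMap.ext fun u => by rw [Matrix.toLin'_apply]; rfl
    have hCt : Matrix.toLin' C = c := LinearMap.ext fun u => by rw [Matrix.toLin'_apply]; rfl
    have hDt : Matrix.toLin' D = d := LinearMap.ext fun u => by rw [Matrix.toLin'_apply]; rfl
    have hEt : Matrix.toLin' E = e := LinearMap.ext fun u => by rw [Matrix.toLin'_apply]; rfl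
    have hAt : Matrix.toLin' A = a := LinearMap.ext fun u => by rw [Matrix.toLin'_apply]; rfl
    rw [hBt, hCt, hDt, hEt, hAt]
    apply LinearMap.ext
    intro v
    show b (x (d v)) + c (y (e v)) = a v
    rw [hbxd v, hcye v]
    exact sub_add_cancel _ _
  · have hmvy : (LinearMap.toMatrix' y).mulVecLin = y := by
      apply LinearMap.ext
      intro u
      rw [Matrix.mulVecLin_apply, ← Matrix.toLin'_apply, Matrix.toLin'_toMatrix']
    have hYr : (LinearMap.toMatrix' y).rank = finrank ℂ (LinearMap.range y) := by
      rw [Matrix.rank, hmvy]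
    have hyr : finrank ℂ (LinearMap.range y) ≤ finrank ℂ (LinearMap.range N) := by
      rw [hy]
      calc finrank ℂ (LinearMap.range (cinv ∘ₗ N ∘ₗ einv))
          = finrank ℂ ((LinearMap.range (N ∘ₗ einv)).map cinv) := by
            rw [LinearMap.range_comp]
        _ ≤ finrank ℂ (LinearMap.range (N ∘ₗ einv)) := Submodule.finrank_map_le _ _
        _ = finrank ℂ ((LinearMap.range einv).map N) := by rw [LinearMap.range_comp]
        _ ≤ finrank ℂ (LinearMap.range N) := Submodule.finrank_mono
            (by rintro w ⟨u, hu, rfl⟩; exact ⟨u, rfl⟩)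
    rw [hYr]
    omega

set_option maxHeartbeats 1000000 in
/-- Minimal rank of `Y` among the solutions of `B*X*D + C*Y*E = A`. -/
theorem min_rank_Y_solution (m n p1 p2 q1 q2 : ℕ)
    (A : Matrix (Fin m) (Fin n) ℂ) (B : Matrix (Fin m) (Fin p1) ℂ)
    (C : Matrix (Fin m) (Fin p2) ℂ) (D : Matrix (Fin q1) (Fin n) ℂ)
    (E : Matrix (Fin q2) (Fin n) ℂ)
    (hcons : ∃ (X : Matrix (Fin p1) (Fin q1) ℂ) (Y : Matrix (Fin p2) (Fin q2) ℂ),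
        B * X * D + C * Y * E = A) :
    IsLeast {r : ℤ | ∃ (X : Matrix (Fin p1) (Fin q1) ℂ) (Y : Matrix (Fin p2) (Fin q2) ℂ),
        B * X * D + C * Y * E = A ∧ r = (Y.rank : ℤ)}
      (((fromCols A B).rank : ℤ) + ((fromRows A D).rank : ℤ)
        - ((fromBlocks A B D 0).rank : ℤ)) := by
  classical
  obtain ⟨X0, Y0, h0⟩ := hcons
  have hE1 := aux_rank_fromColumns m n p1 A B
  have hE2 := aux_rank_fromRows m n q1 A D
  have hE3 := aux_rank_fromBlocks m n p1 q1 A B D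
  have hlow : ∀ (X : Matrix (Fin p1) (Fin q1) ℂ) (Y : Matrix (Fin p2) (Fin q2) ℂ),
      B * X * D + C * Y * E = A →
      finrank ℂ (LinearMap.range ((LinearMap.range B.mulVecLin).mkQ ∘ₗ A.mulVecLin))
          + finrank ℂ (LinearMap.range (A.mulVecLin ∘ₗ (LinearMap.ker D.mulVecLin).subtype))
        ≤ Y.rank + finrank ℂ (LinearMap.range ((LinearMap.range B.mulVecLin).mkQ ∘ₗ
            A.mulVecLin ∘ₗ (LinearMap.ker D.mulVecLin).subtype)) := by
    intro X Y hXY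
    have hv : ∀ v, A.mulVecLin v
        = B.mulVecLin (X.mulVecLin (D.mulVecLin v))
          + C.mulVecLin (Y.mulVecLin (E.mulVecLin v)) := by
      intro v
      have h : (B * X * D + C * Y * E) *ᵥ v = A *ᵥ v := by rw [hXY]
      rw [Matrix.add_mulVec, ← Matrix.mulVec_mulVec, ← Matrix.mulVec_mulVec,
        ← Matrix.mulVec_mulVec, ← Matrix.mulVec_mulVec] at h
      simpa [Matrix.mulVecLin_apply] using h.symm
    have hπn : (LinearMap.range B.mulVecLin).mkQ ∘ₗ (C.mulVecLin ∘ₗ Y.mulVecLin ∘ₗ E.mulVecLin)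
        = (LinearMap.range B.mulVecLin).mkQ ∘ₗ A.mulVecLin := by
      apply LinearMap.ext
      intro v
      simp only [LinearMap.comp_apply]
      rw [hv v, map_add]
      have hz : (LinearMap.range B.mulVecLin).mkQ
          (B.mulVecLin (X.mulVecLin (D.mulVecLin v))) = 0 := by
        rw [Submodule.mkQ_apply, Submodule.Quotient.mk_eq_zero]
        exact LinearMap.mem_range_self _ _
      rw [hz, zero_add]
    have hιn : (C.mulVecLin ∘ₗ Y.mulVecLin ∘ₗ E.mulVecLin) ∘ₗ (LinearMap.ker D.mulVecLin).subtype
        = A.mulVecLin ∘ₗ (LinearMap.ker D.mulVecLin).subtype := by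
      apply LinearMap.ext
      rintro ⟨v, hvk⟩
      simp only [LinearMap.comp_apply, Submodule.coe_subtype]
      rw [hv v]
      have hdv : D.mulVecLin v = 0 := hvk
      rw [hdv, map_zero, map_zero, zero_add]
    have hfrob := aux_frobenius (K := ℂ) ((LinearMap.range B.mulVecLin).mkQ)
      (C.mulVecLin ∘ₗ Y.mulVecLin ∘ₗ E.mulVecLin) ((LinearMap.ker D.mulVecLin).subtype)
    rw [hπn] at hfrob
    rw [hιn] at hfrob
    rw [LinearMap.comp_assoc] at hfrob
    have h1 : finrank ℂ (LinearMap.range (C.mulVecLin ∘ₗ Y.mulVecLin ∘ₗ E.mulVecLin))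
        ≤ Y.rank := by
      rw [Matrix.rank]
      calc finrank ℂ (LinearMap.range (C.mulVecLin ∘ₗ Y.mulVecLin ∘ₗ E.mulVecLin))
          = finrank ℂ ((LinearMap.range (Y.mulVecLin ∘ₗ E.mulVecLin)).map C.mulVecLin) := by
            rw [LinearMap.range_comp]
        _ ≤ finrank ℂ (LinearMap.range (Y.mulVecLin ∘ₗ E.mulVecLin)) :=
            Submodule.finrank_map_le _ _
        _ = finrank ℂ ((LinearMap.range E.mulVecLin).map Y.mulVecLin) := by
            rw [LinearMap.range_comp]
        _ ≤ finrank ℂ (LinearMap.range Y.mulVecLin) := Submodule.finrank_mono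
            (by rintro w ⟨u, hu, rfl⟩; exact ⟨u, rfl⟩)
    omega
  obtain ⟨X1, Y1, hsol1, hach⟩ := aux_achieve m n p1 p2 q1 q2 A B C D E X0 Y0 h0
  constructor
  · refine ⟨X1, Y1, hsol1, ?_⟩
    have hl := hlow X1 Y1 hsol1
    rw [hE1, hE2, hE3]
    push_cast
    omega
  · rintro r ⟨X, Y, hXY, rfl⟩
    have hl := hlow X Y hXY
    rw [hE1, hE2, hE3]
    push_cast
    omega
end

section
/- Let m2, m3, m4, n2, n3, n4 be natural numbers and let A3 ∈ ℂ^{m2×n4} and A7 ∈ ℂ^{m4×n2} be fixed. For matrices Z1 ∈ ℂ^{m2×n2}, Z2 ∈ ℂ^{m2×n3}, Z3 ∈ ℂ^{m3×n2}, Z4 ∈ ℂ^{m3×n3}, Z5 ∈ ℂ^{m3×n4}, Z6 ∈ ℂ^{m4×n3}, Z7 ∈ ℂ^{m4×n4}, let Ω(Z1,…,Z7) denote the 3×3 block matrix [Z1 Z2 A3; Z3 Z4 Z5; A7 Z6 Z7]. Then the minimum of r(Ω(Z1,…,Z7)) over all choices of Z1, …, Z7 equals max{ r(A3), r(A7) }.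 -/
open Matrix

/-- Rank of a submatrix (arbitrary row and column selection) is at most the rank. -/
lemma rank_submatrix_le_general {l o m n : Type*} [Fintype m] [Fintype n] [Fintype l]
    [Fintype o] [DecidableEq m] [DecidableEq n]
    (f : l → m) (g : o → n) (M : Matrix m n ℂ) :
    (M.submatrix f g).rank ≤ M.rank := by
  have h1 : ((1 : Matrix m m ℂ).submatrix f (Equiv.refl m)) * M = M.submatrix f id := by
    rw [one_submatrix_mul]
    rfl
  have h2 : (M.submatrix f id) * ((1 : Matrix n n ℂ).submatrix (Equiv.refl n) g)
      = M.submatrix f g := by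
    rw [mul_submatrix_one]
    simp [Matrix.submatrix_submatrix]
  calc (M.submatrix f g).rank
      = ((M.submatrix f id) * ((1 : Matrix n n ℂ).submatrix (Equiv.refl n) g)).rank := by
        rw [h2]
    _ ≤ (M.submatrix f id).rank := Matrix.rank_mul_le_left _ _
    _ = (((1 : Matrix m m ℂ).submatrix f (Equiv.refl m)) * M).rank := by rw [h1]
    _ ≤ M.rank := Matrix.rank_mul_le_right _ _

/-- Rank factorization, padded to any `r ≥ rank`. -/
lemma exists_factorization {m n : ℕ} (A : Matrix (Fin m) (Fin n) ℂ) (r : ℕ)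
    (h : A.rank ≤ r) :
    ∃ (B : Matrix (Fin m) (Fin r) ℂ) (C : Matrix (Fin r) (Fin n) ℂ), A = B * C := by
  classical
  set f := A.mulVecLin with hf
  set V := LinearMap.range f with hV
  have hr : Module.finrank ℂ V = A.rank := rfl
  let b : Module.Basis (Fin (Module.finrank ℂ V)) ℂ V := Module.finBasis ℂ V
  let e : V ≃ₗ[ℂ] (Fin A.rank → ℂ) := (b.reindex (finCongr hr)).equivFun
  let g1 : (Fin r → ℂ) →ₗ[ℂ] (Fin m → ℂ) :=
    V.subtype ∘ₗ (e.symm : (Fin A.rank → ℂ) →ₗ[ℂ] V) ∘ₗ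
      LinearMap.funLeft ℂ ℂ (Fin.castLE h)
  let g2 : (Fin n → ℂ) →ₗ[ℂ] (Fin r → ℂ) :=
    (Function.ExtendByZero.linearMap ℂ (Fin.castLE h)) ∘ₗ
      (e : V →ₗ[ℂ] (Fin A.rank → ℂ)) ∘ₗ f.rangeRestrict
  have hinj : Function.Injective (Fin.castLE h) := Fin.castLE_injective h
  have hext : ∀ v : Fin A.rank → ℂ,
      (LinearMap.funLeft ℂ ℂ (Fin.castLE h))
        ((Function.ExtendByZero.linearMap ℂ (Fin.castLE h)) v) = v := by
    intro v
    ext i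
    simp [LinearMap.funLeft, Function.ExtendByZero.linearMap, LinearMap.coe_mk, AddHom.coe_mk, hinj.extend_apply]
    exact hinj.extend_apply v 0 i
  have key : g1 ∘ₗ g2 = f := by
    refine LinearMap.ext fun x => ?_
    simp only [g1, g2, LinearMap.comp_apply, LinearEquiv.coe_coe]
    rw [hext, LinearEquiv.symm_apply_apply]
    rfl
  refine ⟨LinearMap.toMatrix' g1, LinearMap.toMatrix' g2, ?_⟩
  have : LinearMap.toMatrix' g1 * LinearMap.toMatrix' g2 = LinearMap.toMatrix' (g1 ∘ₗ g2) :=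
    (LinearMap.toMatrix'_comp g1 g2).symm
  rw [this, key, hf, ← Matrix.toLin'_apply', LinearMap.toMatrix'_toLin']

/-- Minimal rank of the block matrix `[Z1 Z2 A3; Z3 Z4 Z5; A7 Z6 Z7]`. -/
theorem min_rank_Omega (m2 m3 m4 n2 n3 n4 : ℕ)
    (A3 : Matrix (Fin m2) (Fin n4) ℂ) (A7 : Matrix (Fin m4) (Fin n2) ℂ) :
    IsLeast {r : ℕ | ∃ (Z1 : Matrix (Fin m2) (Fin n2) ℂ) (Z2 : Matrix (Fin m2) (Fin n3) ℂ)
        (Z3 : Matrix (Fin m3) (Fin n2) ℂ) (Z4 : Matrix (Fin m3) (Fin n3) ℂ)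
        (Z5 : Matrix (Fin m3) (Fin n4) ℂ) (Z6 : Matrix (Fin m4) (Fin n3) ℂ)
        (Z7 : Matrix (Fin m4) (Fin n4) ℂ),
        r = (fromBlocks Z1 (fromCols Z2 A3) (fromRows Z3 A7)
              (fromBlocks Z4 Z5 Z6 Z7)).rank}
      (max A3.rank A7.rank) := by
  classical
  set r := max A3.rank A7.rank with hrdef
  -- lower bound: any such block matrix has rank at least max
  have lower : ∀ (Z1 : Matrix (Fin m2) (Fin n2) ℂ) (Z2 : Matrix (Fin m2) (Fin n3) ℂ)
      (Z3 : Matrix (Fin m3) (Fin n2) ℂ) (Z4 : Matrix (Fin m3) (Fin n3) ℂ)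
      (Z5 : Matrix (Fin m3) (Fin n4) ℂ) (Z6 : Matrix (Fin m4) (Fin n3) ℂ)
      (Z7 : Matrix (Fin m4) (Fin n4) ℂ),
      r ≤ (fromBlocks Z1 (fromCols Z2 A3) (fromRows Z3 A7)
            (fromBlocks Z4 Z5 Z6 Z7)).rank := by
    intro Z1 Z2 Z3 Z4 Z5 Z6 Z7
    set M := fromBlocks Z1 (fromCols Z2 A3) (fromRows Z3 A7) (fromBlocks Z4 Z5 Z6 Z7)
    have hA3 : A3 = M.submatrix Sum.inl (fun j => Sum.inr (Sum.inr j)) := by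
      ext i j; simp [M]
    have hA7 : A7 = M.submatrix (fun i => Sum.inr (Sum.inr i)) Sum.inl := by
      ext i j; simp [M]
    refine max_le ?_ ?_
    · rw [hA3]; exact rank_submatrix_le_general _ _ M
    · rw [hA7]; exact rank_submatrix_le_general _ _ M
  constructor
  · -- membership: construct Z's achieving rank r
    obtain ⟨B3, C3, hBC3⟩ := exists_factorization A3 r (le_max_left _ _)
    obtain ⟨B7, C7, hBC7⟩ := exists_factorization A7 r (le_max_right _ _)
    have hM : fromBlocks (B3 * C7) (fromCols (0 : Matrix (Fin m2) (Fin n3) ℂ) A3)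
        (fromRows (0 : Matrix (Fin m3) (Fin n2) ℂ) A7)
        (fromBlocks (0 : Matrix (Fin m3) (Fin n3) ℂ) (0 : Matrix (Fin m3) (Fin n4) ℂ)
          (0 : Matrix (Fin m4) (Fin n3) ℂ) (B7 * C3)) =
        (fromRows B3 (fromRows 0 B7) : Matrix (Fin m2 ⊕ (Fin m3 ⊕ Fin m4)) (Fin r) ℂ) *
        (fromCols C7 (fromCols 0 C3) :
          Matrix (Fin r) (Fin n2 ⊕ (Fin n3 ⊕ Fin n4)) ℂ) := by
      rw [hBC3, hBC7]
      ext (i | i | i) (j | j | j) <;>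
        simp [Matrix.mul_apply]
    have hle : (fromBlocks (B3 * C7) (fromCols (0 : Matrix (Fin m2) (Fin n3) ℂ) A3)
        (fromRows (0 : Matrix (Fin m3) (Fin n2) ℂ) A7)
        (fromBlocks (0 : Matrix (Fin m3) (Fin n3) ℂ) (0 : Matrix (Fin m3) (Fin n4) ℂ)
          (0 : Matrix (Fin m4) (Fin n3) ℂ) (B7 * C3))).rank ≤ r := by
      rw [hM]
      calc (fromRows B3 (fromRows 0 B7) * fromCols C7 (fromCols 0 C3)).rank
          ≤ (fromRows B3 (fromRows 0 B7) :
              Matrix (Fin m2 ⊕ (Fin m3 ⊕ Fin m4)) (Fin r) ℂ).rank :=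
            Matrix.rank_mul_le_left _ _
        _ ≤ Fintype.card (Fin r) := Matrix.rank_le_card_width _
        _ = r := Fintype.card_fin r
    have hge := lower (B3 * C7) 0 0 0 0 0 (B7 * C3)
    exact ⟨B3 * C7, 0, 0, 0, 0, 0, B7 * C3, (le_antisymm hle hge).symm⟩
  · rintro x ⟨Z1, Z2, Z3, Z4, Z5, Z6, Z7, rfl⟩
    exact lower _ _ _ _ _ _ _
end

section
/- Let a, b, c, d, e, f be natural numbers and let A1 ∈ ℂ^{a×d}, A2 ∈ ℂ^{a×e}, A4 ∈ ℂ^{b×d} be fixed. For matrices Z3 ∈ ℂ^{a×f}, Z5 ∈ ℂ^{b×e}, Z6 ∈ ℂ^{b×f}, Z7 ∈ ℂ^{c×d}, Z8 ∈ ℂ^{c×e}, Z9 ∈ ℂ^{c×f}, consider the 3×3 block matrix M(Z3,Z5,Z6,Z7,Z8,Z9) = [A1 A2 Z3; A4 Z5 Z6; Z7 Z8 Z9]. Then the minimum of r(M(Z3,Z5,Z6,Z7,Z8,Z9)) over all choices of Z3, Z5, Z6, Z7, Z8, Z9 equals r([A1 A2]) + r([A1; A4]) − r(A1). -/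
open Matrix Module Submodule

namespace MinRankAux

/-- Extend a function by zero on the second summand, as a linear map. -/
def elimZero (α β : Type*) : (α → ℂ) →ₗ[ℂ] (α ⊕ β → ℂ) where
  toFun w := Sum.elim w 0
  map_add' u v := by funext i; cases i <;> simp
  map_smul' r u := by funext i; cases i <;> simp

@[simp] lemma elimZero_apply (α β : Type*) (w : α → ℂ) :
    elimZero α β w = Sum.elim w 0 := rfl

/-- (u,v) ↦ (u,(v,0)) as a linear map on pi types. -/
def assocZero (α β γ : Type*) : (α ⊕ β → ℂ) →ₗ[ℂ] (α ⊕ (β ⊕ γ) → ℂ) where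
  toFun u := Sum.elim (u ∘ Sum.inl) (Sum.elim (u ∘ Sum.inr) 0)
  map_add' u v := by funext i; rcases i with i | i | i <;> simp
  map_smul' r u := by funext i; rcases i with i | i | i <;> simp

@[simp] lemma assocZero_apply (α β γ : Type*) (u : α ⊕ β → ℂ) :
    assocZero α β γ u = Sum.elim (u ∘ Sum.inl) (Sum.elim (u ∘ Sum.inr) 0) := rfl

lemma rank_nullity_sub {V W : Type*} [AddCommGroup V] [Module ℂ V] [FiniteDimensional ℂ V]
    [AddCommGroup W] [Module ℂ W] (p : Submodule ℂ V) (π : V →ₗ[ℂ] W) :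
    finrank ℂ (p.map π) + finrank ℂ ↥(p ⊓ LinearMap.ker π) = finrank ℂ p := by
  have h := LinearMap.finrank_range_add_finrank_ker (π.domRestrict p)
  rw [LinearMap.range_domRestrict, LinearMap.ker_domRestrict,
    show finrank ℂ ↥((LinearMap.ker π).comap p.subtype)
        = finrank ℂ ↥(p ⊓ LinearMap.ker π) by
      rw [← Submodule.finrank_map_subtype_eq p, Submodule.map_comap_subtype]] at h
  exact h


lemma lower (a b c d e f : ℕ)
    (A1 : Matrix (Fin a) (Fin d) ℂ) (A2 : Matrix (Fin a) (Fin e) ℂ)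
    (A4 : Matrix (Fin b) (Fin d) ℂ)
    (Z3 : Matrix (Fin a) (Fin f) ℂ) (Z5 : Matrix (Fin b) (Fin e) ℂ)
    (Z6 : Matrix (Fin b) (Fin f) ℂ) (Z7 : Matrix (Fin c) (Fin d) ℂ)
    (Z8 : Matrix (Fin c) (Fin e) ℂ) (Z9 : Matrix (Fin c) (Fin f) ℂ) :
    (fromCols A1 A2).rank + (fromRows A1 A4).rank ≤
      (fromBlocks A1 (fromCols A2 Z3) (fromRows A4 Z7)
        (fromBlocks Z5 Z6 Z8 Z9)).rank + A1.rank := by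
  set M : Matrix (Fin a ⊕ (Fin b ⊕ Fin c)) (Fin d ⊕ (Fin e ⊕ Fin f)) ℂ :=
    fromBlocks A1 (fromCols A2 Z3) (fromRows A4 Z7) (fromBlocks Z5 Z6 Z8 Z9) with hM
  set π : ((Fin a ⊕ (Fin b ⊕ Fin c)) → ℂ) →ₗ[ℂ] (Fin a → ℂ) :=
    LinearMap.funLeft ℂ ℂ Sum.inl with hπ
  set ρ : ((Fin a ⊕ (Fin b ⊕ Fin c)) → ℂ) →ₗ[ℂ] ((Fin a ⊕ Fin b) → ℂ) :=
    LinearMap.funLeft ℂ ℂ (Sum.map id Sum.inl) with hρ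
  set N : Matrix (Fin a ⊕ (Fin b ⊕ Fin c)) (Fin d) ℂ := fromRows A1 (fromRows A4 Z7) with hN
  set V := LinearMap.range M.mulVecLin with hV
  set V₁ := LinearMap.range N.mulVecLin with hV₁
  have hMN : ∀ x : Fin d → ℂ, N.mulVecLin x = M.mulVecLin (Sum.elim x 0) := by
    intro x
    simp [hM, hN, fromBlocks_mulVec]
  have hV1V : V₁ ≤ V := by
    rintro _ ⟨x, rfl⟩
    exact ⟨Sum.elim x 0, (hMN x).symm⟩
  have h1 : finrank ℂ (V.map π) + finrank ℂ ↥(V ⊓ LinearMap.ker π) = M.rank :=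
    rank_nullity_sub V π
  have h2 : finrank ℂ (V₁.map π) + finrank ℂ ↥(V₁ ⊓ LinearMap.ker π) = N.rank :=
    rank_nullity_sub V₁ π
  have h3 : (fromCols A1 A2).rank ≤ finrank ℂ (V.map π) := by
    have key : ∀ (x : Fin d → ℂ) (y : Fin e → ℂ),
        π (M.mulVecLin (Sum.elim x (Sum.elim y 0))) = A1 *ᵥ x + A2 *ᵥ y := by
      intro x y
      rw [hπ, hM]
      simp only [mulVecLin_apply, fromBlocks_mulVec,
        Sum.elim_comp_inl, Sum.elim_comp_inr, fromCols_mulVec_sumElim,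
        Matrix.mulVec_zero, add_zero]
      funext i
      simp only [LinearMap.funLeft_apply, Sum.elim_inl]
    have hle : LinearMap.range (fromCols A1 A2).mulVecLin ≤ V.map π := by
      rintro _ ⟨v, rfl⟩
      refine ⟨M.mulVecLin (Sum.elim (v ∘ Sum.inl) (Sum.elim (v ∘ Sum.inr) 0)),
        ⟨_, rfl⟩, ?_⟩
      rw [key, mulVecLin_apply]
      conv_rhs => rw [← Sum.elim_comp_inl_inr v]
      rw [fromCols_mulVec_sumElim]
    exact Submodule.finrank_mono hle
  have h4 : V₁.map π ≤ LinearMap.range A1.mulVecLin := by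
    rintro _ ⟨_, ⟨x, rfl⟩, rfl⟩
    refine ⟨x, ?_⟩
    rw [hπ, hN]
    funext i
    simp only [mulVecLin_apply, fromRows_mulVec, LinearMap.funLeft_apply, Sum.elim_inl]
  have h4' : finrank ℂ (V₁.map π) ≤ A1.rank := Submodule.finrank_mono h4
  have h5 : finrank ℂ ↥(V₁ ⊓ LinearMap.ker π) ≤ finrank ℂ ↥(V ⊓ LinearMap.ker π) :=
    Submodule.finrank_mono (inf_le_inf_right _ hV1V)
  have h6 : (fromRows A1 A4).rank ≤ N.rank := by
    have hcomp : (fromRows A1 A4).mulVecLin = ρ.comp N.mulVecLin := by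
      apply LinearMap.ext
      intro x
      funext i
      rcases i with i | i <;>
        simp [hN, hρ, LinearMap.funLeft_apply]
    have : LinearMap.range (fromRows A1 A4).mulVecLin = V₁.map ρ := by
      rw [hcomp, LinearMap.range_comp, hV₁]
    rw [Matrix.rank, this]
    exact Submodule.finrank_map_le ρ V₁
  omega


lemma upper (a b c d e f : ℕ)
    (A1 : Matrix (Fin a) (Fin d) ℂ) (A2 : Matrix (Fin a) (Fin e) ℂ)
    (A4 : Matrix (Fin b) (Fin d) ℂ) :
    ∃ Z5 : Matrix (Fin b) (Fin e) ℂ,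
      (fromBlocks A1 (fromCols A2 (0 : Matrix (Fin a) (Fin f) ℂ))
        (fromRows A4 (0 : Matrix (Fin c) (Fin d) ℂ))
        (fromBlocks Z5 (0 : Matrix (Fin b) (Fin f) ℂ)
          (0 : Matrix (Fin c) (Fin e) ℂ) (0 : Matrix (Fin c) (Fin f) ℂ))).rank + A1.rank ≤
      (fromCols A1 A2).rank + (fromRows A1 A4).rank := by
  set S := LinearMap.range A1.mulVecLin with hS
  set T := LinearMap.range (fromCols A1 A2).mulVecLin with hT
  have hST : S ≤ T := by
    rintro _ ⟨x, rfl⟩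
    refine ⟨Sum.elim x 0, ?_⟩
    simp [mulVecLin_apply]
  obtain ⟨U, hU⟩ := Submodule.exists_isCompl S
  set W := U ⊓ T with hW
  have hsup : S ⊔ W = T := by
    have h := sup_inf_assoc_of_le (x := S) U (z := T) hST
    rw [hU.codisjoint.eq_top, top_inf_eq] at h
    exact h.symm
  have hdisj : S ⊓ W = ⊥ := by
    have h1 : S ⊓ W ≤ S ⊓ U := inf_le_inf_left S inf_le_left
    rw [hU.disjoint.eq_bot] at h1
    exact le_bot_iff.mp h1
  have hdim : finrank ℂ T = A1.rank + finrank ℂ W := by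
    have h := Submodule.finrank_sup_add_finrank_inf_eq S W
    rw [hsup, hdisj, finrank_bot, add_zero] at h
    exact h
  -- decompose the columns of A2
  have hcol : ∀ j : Fin e, ∃ (x : Fin d → ℂ) (w : Fin a → ℂ), w ∈ W ∧
      ∀ i, A2 i j = (A1 *ᵥ x) i + w i := by
    intro j
    have hmem : (fun i => A2 i j) ∈ T := by
      refine ⟨Sum.elim 0 (Pi.single j 1), ?_⟩
      funext i
      simp [mulVecLin_apply, mulVec, dotProduct, Pi.single_apply, mul_ite]
    rw [← hsup] at hmem
    obtain ⟨s, hs, w, hw, heq⟩ := Submodule.mem_sup.mp hmem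
    obtain ⟨x, hx⟩ := hs
    refine ⟨x, w, hw, fun i => ?_⟩
    have := congrFun heq i
    rw [← this, ← hx]
    simp [mulVecLin_apply]
  choose x w hw heq using hcol
  refine ⟨Matrix.of (fun i j => (A4 *ᵥ x j) i), ?_⟩
  set Z5 : Matrix (Fin b) (Fin e) ℂ := Matrix.of (fun i j => (A4 *ᵥ x j) i) with hZ5
  set M₀ : Matrix (Fin a ⊕ (Fin b ⊕ Fin c)) (Fin d ⊕ (Fin e ⊕ Fin f)) ℂ :=
    fromBlocks A1 (fromCols A2 0) (fromRows A4 0) (fromBlocks Z5 0 0 0) with hM₀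
  set φ := assocZero (Fin a) (Fin b) (Fin c) with hφ
  set J := elimZero (Fin a) (Fin b ⊕ Fin c) with hJ
  set N₀ := fromRows A1 A4 with hN₀
  have key : LinearMap.range M₀.mulVecLin ≤
      (LinearMap.range N₀.mulVecLin).map φ ⊔ W.map J := by
    rintro _ ⟨v, rfl⟩
    set x0 : Fin d → ℂ := v ∘ Sum.inl with hx0
    set y : Fin e → ℂ := fun j => v (Sum.inr (Sum.inl j)) with hy
    refine Submodule.mem_sup.mpr
      ⟨φ (N₀.mulVecLin (x0 + ∑ j, y j • x j)), ⟨_, ⟨_, rfl⟩, rfl⟩,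
        J (∑ j, y j • w j), ⟨∑ j, y j • w j,
          Submodule.sum_mem W (fun j _ => Submodule.smul_mem W _ (hw j)), rfl⟩, ?_⟩
    funext i
    have hxsum : ∀ (B : Matrix (Fin b) (Fin d) ℂ) (i : Fin b),
        (B *ᵥ (∑ j, y j • x j)) i = ∑ j, y j * (B *ᵥ x j) i := by
      intro B i
      rw [show B *ᵥ (∑ j, y j • x j) = B.mulVecLin (∑ j, y j • x j) from rfl,
        map_sum]
      simp [mulVecLin_apply]
    have hxsumA : ∀ (B : Matrix (Fin a) (Fin d) ℂ) (i : Fin a),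
        (B *ᵥ (∑ j, y j • x j)) i = ∑ j, y j * (B *ᵥ x j) i := by
      intro B i
      rw [show B *ᵥ (∑ j, y j • x j) = B.mulVecLin (∑ j, y j • x j) from rfl,
        map_sum]
      simp [mulVecLin_apply]
    rcases i with i | i | i
    · -- top row block
      simp only [mulVecLin_apply, hM₀, fromBlocks_mulVec, Sum.elim_inl,
        Pi.add_apply, hφ, hJ, assocZero_apply, elimZero_apply, Function.comp_apply,
        fromRows_mulVec, hN₀]
      -- LHS: (A1 *ᵥ x0) i + (fromColumns A2 0 *ᵥ (v ∘ Sum.inr)) i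
      have hv2 : (fromCols A2 (0 : Matrix (Fin a) (Fin f) ℂ) *ᵥ (v ∘ Sum.inr)) i
          = ∑ j, y j * A2 i j := by
        rw [show (v ∘ Sum.inr) = Sum.elim y (fun j => v (Sum.inr (Sum.inr j))) by
          funext k; rcases k with k | k <;> rfl]
        simp [mulVec, dotProduct, mul_comm]
      rw [hv2, Matrix.mulVec_add, Pi.add_apply, hxsumA A1 i]
      simp only [Finset.sum_apply, Pi.smul_apply, smul_eq_mul]
      rw [add_assoc, ← Finset.sum_add_distrib]
      congr 1
      apply Finset.sum_congr rfl
      intro j _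
      rw [heq j i]
      ring
    · -- middle row block
      simp only [mulVecLin_apply, hM₀, fromBlocks_mulVec, Sum.elim_inr, Sum.elim_inl,
        Pi.add_apply, hφ, hJ, assocZero_apply, elimZero_apply, Function.comp_apply,
        fromRows_mulVec, hN₀]
      have hZ : (Z5 *ᵥ (v ∘ Sum.inr) ∘ Sum.inl) i = ∑ j, y j * (A4 *ᵥ x j) i := by
        simp [hZ5, mulVec, dotProduct, mul_comm]; rfl
      rw [hZ, Matrix.mulVec_add, Pi.add_apply, hxsum A4 i]
      simp only [Matrix.zero_mulVec, Pi.zero_apply, add_zero]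
      rfl
    · -- bottom row block
      simp only [mulVecLin_apply, hM₀, fromBlocks_mulVec, Sum.elim_inr,
        Pi.add_apply, hφ, hJ, assocZero_apply, elimZero_apply, Function.comp_apply,
        fromRows_mulVec, hN₀]
      simp [Matrix.zero_mulVec]
  have hrank : M₀.rank ≤ N₀.rank + finrank ℂ W := by
    have h1 : M₀.rank ≤ finrank ℂ ↥((LinearMap.range N₀.mulVecLin).map φ ⊔ W.map J) :=
      Submodule.finrank_mono key
    have h2 := Submodule.finrank_sup_add_finrank_inf_eq
      ((LinearMap.range N₀.mulVecLin).map φ) (W.map J)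
    have h3 : finrank ℂ ((LinearMap.range N₀.mulVecLin).map φ) ≤ N₀.rank :=
      Submodule.finrank_map_le φ _
    have h4 : finrank ℂ (W.map J) ≤ finrank ℂ W := Submodule.finrank_map_le J W
    omega
  have : (fromCols A1 A2).rank = A1.rank + finrank ℂ W := hdim
  omega

end MinRankAux

/-- Minimal rank of the block matrix `[A1 A2 Z3; A4 Z5 Z6; Z7 Z8 Z9]`. -/
theorem min_rank_partial_block (a b c d e f : ℕ)
    (A1 : Matrix (Fin a) (Fin d) ℂ) (A2 : Matrix (Fin a) (Fin e) ℂ)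
    (A4 : Matrix (Fin b) (Fin d) ℂ) :
    IsLeast {r : ℤ | ∃ (Z3 : Matrix (Fin a) (Fin f) ℂ) (Z5 : Matrix (Fin b) (Fin e) ℂ)
        (Z6 : Matrix (Fin b) (Fin f) ℂ) (Z7 : Matrix (Fin c) (Fin d) ℂ)
        (Z8 : Matrix (Fin c) (Fin e) ℂ) (Z9 : Matrix (Fin c) (Fin f) ℂ),
        r = ((fromBlocks A1 (fromCols A2 Z3) (fromRows A4 Z7)
              (fromBlocks Z5 Z6 Z8 Z9)).rank : ℤ)}
      (((fromCols A1 A2).rank : ℤ) + ((fromRows A1 A4).rank : ℤ) - (A1.rank : ℤ)) := by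
  constructor
  · obtain ⟨Z5, hZ5⟩ := MinRankAux.upper a b c d e f A1 A2 A4
    have hlow := MinRankAux.lower a b c d e f A1 A2 A4 0 Z5 0 0 0 0
    exact ⟨0, Z5, 0, 0, 0, 0, by omega⟩
  · rintro r ⟨Z3, Z5, Z6, Z7, Z8, Z9, rfl⟩
    have := MinRankAux.lower a b c d e f A1 A2 A4 Z3 Z5 Z6 Z7 Z8 Z9
    omega
end
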